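/- Assume Λ_ℓ ≠ 2Λ_s. Let p : Φ̊ → Y be ℤ-linear with p(α) ∈ Λ_s for every α ∈ Φ̊_s, and let S be maximal among subsets T ⊆ Y such that: T is a union of cosets of the subgroup 2Λ_s with 2Λ_s ⊆ T, p(α) + T ⊆ Λ_ℓ for every α ∈ Φ̊_ℓ, and p(α) + T ≠ Λ_ℓ for every α ∈ Φ̊_ℓ. Then Ψ := {(α,λ) : α ∈ Φ̊_s, λ ∈ Λ_s} ∪ {(α, p(α)+s) : α ∈ Φ̊_ℓ, s ∈ S} is a maximal root subsystem of Φ. -/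

import Mathlib

open RealInnerProductSpace

noncomputable section

/-- The standard basis vector `e i` of `ℝ^n`. -/
def ee (n : ℕ) (i : Fin n) : EuclideanSpace ℝ (Fin n) := EuclideanSpace.single i 1

/-- The set `{±e_i : 1 ≤ i ≤ n}`. -/
def pmE (n : ℕ) : Set (EuclideanSpace ℝ (Fin n)) :=
  {v | ∃ i : Fin n, v = ee n i ∨ v = -ee n i}

/-- The set `{±e_i ± e_j : i ≠ j}`. -/
def pmEE (n : ℕ) : Set (EuclideanSpace ℝ (Fin n)) :=
  {v | ∃ i j : Fin n, i ≠ j ∧ ∃ ε δ : ℝ, (ε = 1 ∨ ε = -1) ∧ (δ = 1 ∨ δ = -1) ∧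
    v = ε • ee n i + δ • ee n j}

/-- The set `{±2e_i : 1 ≤ i ≤ n}`. -/
def pm2E (n : ℕ) : Set (EuclideanSpace ℝ (Fin n)) :=
  {v | ∃ i : Fin n, v = (2 : ℝ) • ee n i ∨ v = -((2 : ℝ) • ee n i)}

/-- The reflection `s_α(β) = β − (2⟨β,α⟩/⟨α,α⟩)α`. -/
def reflV {V : Type*} [NormedAddCommGroup V] [InnerProductSpace ℝ V] (α β : V) : V :=
  β - (2 * ⟪β, α⟫ / ⟪α, α⟫) • α

/-- A root subsystem of `Φ` (w.r.t. a given reflection map): a nonempty subset of `Φ`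
closed under the reflections in its own elements. -/
def IsRootSubsystem {X : Type*} (refl : X → X → X) (Φ Ψ : Set X) : Prop :=
  Ψ.Nonempty ∧ Ψ ⊆ Φ ∧ ∀ a ∈ Ψ, ∀ b ∈ Ψ, refl a b ∈ Ψ

/-- A maximal root subsystem of `Φ`: a proper root subsystem such that every root
subsystem `Ψ'` with `Ψ ⊆ Ψ' ≠ Φ` equals `Ψ`. -/
def IsMaximalRootSubsystem {X : Type*} (refl : X → X → X) (Φ Ψ : Set X) : Prop :=
  IsRootSubsystem refl Φ Ψ ∧ Ψ ≠ Φ ∧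
    ∀ Ψ' : Set X, IsRootSubsystem refl Φ Ψ' → Ψ ⊆ Ψ' → Ψ' ≠ Φ → Ψ' = Ψ

/-- The affine reflection `s_a(b) = b − (2⟨b₁,a₁⟩/⟨a₁,a₁⟩)·a` on `V × Y`. -/
def reflA {V Y : Type*} [NormedAddCommGroup V] [InnerProductSpace ℝ V]
    [AddCommGroup Y] [Module ℝ Y] (a b : V × Y) : V × Y :=
  b - (2 * ⟪b.1, a.1⟫ / ⟪a.1, a.1⟫) • a

/-- `p : Φ̊ → Y` is ℤ-linear: `p(s_α(β)) = p(β) − (2⟨β,α⟩/⟨α,α⟩)·p(α)` for `α, β ∈ Φ̊`. -/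
def IsZLin {V Y : Type*} [NormedAddCommGroup V] [InnerProductSpace ℝ V]
    [AddCommGroup Y] [Module ℝ Y] (Φ₀ : Set V) (p : V → Y) : Prop :=
  ∀ α ∈ Φ₀, ∀ β ∈ Φ₀, p (reflV α β) = p β - (2 * ⟪β, α⟫ / ⟪α, α⟫) • p α

/-- The property of the subsets `T ⊆ Y` among which `S` is maximal in STATEMENT 4:
`T` is a union of cosets of `2Λ_s` with `2Λ_s ⊆ T`, and `p(α) + T ⊆ Λ_ℓ` and
`p(α) + T ≠ Λ_ℓ` for every long root `α`. -/
def CGoodT (n : ℕ) {Y : Type*} [AddCommGroup Y]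
    (Λs : AddSubgroup Y) (Λℓ : Set Y) (p : EuclideanSpace ℝ (Fin n) → Y)
    (T : Set Y) : Prop :=
  (∀ x ∈ Λs, 2 • x ∈ T) ∧
  (∀ t ∈ T, ∀ x ∈ Λs, t + 2 • x ∈ T) ∧
  (∀ α ∈ pm2E n, ∀ t ∈ T, p α + t ∈ Λℓ) ∧
  (∀ α ∈ pm2E n, {y | ∃ t ∈ T, y = p α + t} ≠ Λℓ)

lemma inner_ee (n : ℕ) (i j : Fin n) : ⟪ee n i, ee n j⟫ = if i = j then (1:ℝ) else 0 := by
  simp [ee, EuclideanSpace.inner_single_left, EuclideanSpace.single_apply]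

lemma zsign_cast {d : ℤ} (h : d = 1 ∨ d = -1) : ((d:ℝ) = 1 ∨ (d:ℝ) = -1) := by
  rcases h with rfl|rfl <;> norm_num

lemma zsign_neg {d : ℤ} (h : d = 1 ∨ d = -1) : (-d = 1 ∨ -d = -1) := by
  rcases h with rfl|rfl <;> norm_num

lemma zsign_mul {d e : ℤ} (h : d = 1 ∨ d = -1) (h' : e = 1 ∨ e = -1) :
    (d*e = 1 ∨ d*e = -1) := by
  rcases h with rfl|rfl <;> rcases h' with rfl|rfl <;> norm_num

lemma zsign_sq {d : ℤ} (h : d = 1 ∨ d = -1) : ((d:ℝ)*(d:ℝ) = 1) := by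
  rcases h with rfl|rfl <;> norm_num

lemma mem_pmEE' (n : ℕ) (i j : Fin n) (hij : i ≠ j) (d e : ℤ) (hd : d = 1 ∨ d = -1)
    (he : e = 1 ∨ e = -1) (v : EuclideanSpace ℝ (Fin n))
    (hv : v = (d:ℝ) • ee n i + (e:ℝ) • ee n j) : v ∈ pmEE n :=
  ⟨i, j, hij, _, _, zsign_cast hd, zsign_cast he, hv⟩

lemma mem_pm2E' (n : ℕ) (i : Fin n) (d : ℤ) (hd : d = 1 ∨ d = -1)
    (v : EuclideanSpace ℝ (Fin n)) (hv : v = (d:ℝ) • ((2:ℝ) • ee n i)) : v ∈ pm2E n := by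
  rcases hd with rfl|rfl
  · exact ⟨i, Or.inl (by rw [hv]; push_cast; module)⟩
  · exact ⟨i, Or.inr (by rw [hv]; push_cast; module)⟩

lemma inner_ss (n : ℕ) (i j k l : Fin n) (x y : ℝ) :
    ⟪ee n k + y • ee n l, ee n i + x • ee n j⟫ =
      (if k = i then (1:ℝ) else 0) + x * (if k = j then 1 else 0)
        + y * (if l = i then 1 else 0) + y * x * (if l = j then 1 else 0) := by
  simp only [inner_add_left, inner_add_right, real_inner_smul_left,
    real_inner_smul_right, inner_ee]
  ring

lemma inner_sl (n : ℕ) (i j k : Fin n) (x : ℝ) :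
    ⟪(2:ℝ) • ee n k, ee n i + x • ee n j⟫ =
      2 * (if k = i then (1:ℝ) else 0) + 2 * x * (if k = j then 1 else 0) := by
  simp only [inner_add_right, real_inner_smul_left, real_inner_smul_right, inner_ee]
  ring

lemma inner_ls (n : ℕ) (i k l : Fin n) (y : ℝ) :
    ⟪ee n k + y • ee n l, (2:ℝ) • ee n i⟫ =
      2 * (if k = i then (1:ℝ) else 0) + 2 * y * (if l = i then 1 else 0) := by
  simp only [inner_add_left, real_inner_smul_left, real_inner_smul_right, inner_ee]
  ring

lemma inner_ll (n : ℕ) (i k : Fin n) :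
    ⟪(2:ℝ) • ee n k, (2:ℝ) • ee n i⟫ = 4 * (if k = i then (1:ℝ) else 0) := by
  simp only [real_inner_smul_left, real_inner_smul_right, inner_ee]
  ring

lemma snorm (n : ℕ) (i j : Fin n) (hij : i ≠ j) (d : ℤ) (hd : d = 1 ∨ d = -1) :
    ⟪ee n i + (d:ℝ) • ee n j, ee n i + (d:ℝ) • ee n j⟫ = (2:ℝ) := by
  rw [inner_ss]
  simp [hij, hij.symm, zsign_sq hd]
  norm_num

lemma lnorm (n : ℕ) (i : Fin n) :
    ⟪(2:ℝ) • ee n i, (2:ℝ) • ee n i⟫ = (4:ℝ) := by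
  rw [inner_ll]; simp

/-- package a short-target leaf -/
lemma leafS (n : ℕ) (α β : EuclideanSpace ℝ (Fin n)) (m d e : ℤ) (i j : Fin n)
    (hij : i ≠ j) (hd : d = 1 ∨ d = -1) (he : e = 1 ∨ e = -1)
    (hs : 2 * ⟪β, α⟫ / ⟪α, α⟫ = (m:ℝ))
    (hv : β - (m:ℝ) • α = (d:ℝ) • ee n i + (e:ℝ) • ee n j) :
    ∃ m' : ℤ, 2 * ⟪β, α⟫ / ⟪α, α⟫ = (m':ℝ) ∧ reflV α β ∈ pmEE n :=
  ⟨m, hs, mem_pmEE' n i j hij d e hd he _ (by rw [reflV, hs]; exact hv)⟩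

/-- package a long-target leaf -/
lemma leafL (n : ℕ) (α β : EuclideanSpace ℝ (Fin n)) (m d : ℤ) (i : Fin n)
    (hd : d = 1 ∨ d = -1)
    (hs : 2 * ⟪β, α⟫ / ⟪α, α⟫ = ((2*m : ℤ):ℝ))
    (hv : β - ((2*m : ℤ):ℝ) • α = (d:ℝ) • ((2:ℝ) • ee n i)) :
    ∃ m' : ℤ, 2 * ⟪β, α⟫ / ⟪α, α⟫ = ((2*m':ℤ):ℝ) ∧ reflV α β ∈ pm2E n :=
  ⟨m, hs, mem_pm2E' n i d hd _ (by rw [reflV, hs]; exact hv)⟩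


lemma scalar_short (n : ℕ) (i j : Fin n) (hij : i ≠ j) (d₁ : ℤ) (hd₁ : d₁ = 1 ∨ d₁ = -1)
    (β : EuclideanSpace ℝ (Fin n)) :
    2 * ⟪β, ee n i + (d₁:ℝ) • ee n j⟫ / ⟪ee n i + (d₁:ℝ) • ee n j, ee n i + (d₁:ℝ) • ee n j⟫
      = ⟪β, ee n i + (d₁:ℝ) • ee n j⟫ := by
  rw [snorm n i j hij d₁ hd₁]; ring

lemma scalar_long (n : ℕ) (i : Fin n) (β : EuclideanSpace ℝ (Fin n)) :
    2 * ⟪β, (2:ℝ) • ee n i⟫ / ⟪(2:ℝ) • ee n i, (2:ℝ) • ee n i⟫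
      = ⟪β, (2:ℝ) • ee n i⟫ / 2 := by
  rw [lnorm n i]; ring

lemma coreSS1 (n : ℕ) (i j k l : Fin n) (hij : i ≠ j) (hkl : k ≠ l) (d₁ d₂ : ℤ)
    (hd₁ : d₁ = 1 ∨ d₁ = -1) (hd₂ : d₂ = 1 ∨ d₂ = -1) :
    ∃ m : ℤ,
      2 * ⟪ee n k + (d₂:ℝ) • ee n l, ee n i + (d₁:ℝ) • ee n j⟫
          / ⟪ee n i + (d₁:ℝ) • ee n j, ee n i + (d₁:ℝ) • ee n j⟫ = (m:ℝ) ∧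
      reflV (ee n i + (d₁:ℝ) • ee n j) (ee n k + (d₂:ℝ) • ee n l) ∈ pmEE n := by
  by_cases hki : k = i
  · subst hki
    by_cases hlj : l = j
    · subst hlj
      rcases hd₁ with rfl|rfl <;> rcases hd₂ with rfl|rfl
      · exact leafS n _ _ 2 (-1) (-1) k l hkl (by norm_num) (by norm_num)
          (by rw [scalar_short n k l hkl 1 (by norm_num), inner_ss]
              simp [hkl, hkl.symm]; try norm_num)
          (by push_cast; module)
      · exact leafS n _ _ 0 1 (-1) k l hkl (by norm_num) (by norm_num)
          (by rw [scalar_short n k l hkl 1 (by norm_num), inner_ss]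
              simp [hkl, hkl.symm])
          (by push_cast; module)
      · exact leafS n _ _ 0 1 1 k l hkl (by norm_num) (by norm_num)
          (by rw [scalar_short n k l hkl (-1) (by norm_num), inner_ss]
              simp [hkl, hkl.symm])
          (by push_cast; module)
      · exact leafS n _ _ 2 (-1) 1 k l hkl (by norm_num) (by norm_num)
          (by rw [scalar_short n k l hkl (-1) (by norm_num), inner_ss]
              simp [hkl, hkl.symm]; try norm_num)
          (by push_cast; module)
    · exact leafS n _ _ 1 (-d₁) d₂ j l (fun h => hlj h.symm) (zsign_neg hd₁) hd₂
        (by rw [scalar_short n k j hij d₁ hd₁, inner_ss]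
            simp [hij, hij.symm, hkl.symm, hlj])
        (by push_cast; module)
  · by_cases hkj : k = j
    · subst hkj
      by_cases hli : l = i
      · subst hli
        rcases hd₁ with rfl|rfl <;> rcases hd₂ with rfl|rfl
        · exact leafS n _ _ 2 (-1) (-1) k l hkl (by norm_num) (by norm_num)
            (by rw [scalar_short n l k hij 1 (by norm_num), inner_ss]
                simp [hkl, hkl.symm]; try norm_num)
            (by push_cast; module)
        · exact leafS n _ _ 0 1 (-1) k l hkl (by norm_num) (by norm_num)
            (by rw [scalar_short n l k hij 1 (by norm_num), inner_ss]
                simp [hkl, hkl.symm]; try norm_num)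
            (by push_cast; module)
        · exact leafS n _ _ 0 1 1 k l hkl (by norm_num) (by norm_num)
            (by rw [scalar_short n l k hij (-1) (by norm_num), inner_ss]
                simp [hkl, hkl.symm]; try norm_num)
            (by push_cast; module)
        · exact leafS n _ _ (-2) (-1) 1 k l hkl (by norm_num) (by norm_num)
            (by rw [scalar_short n l k hij (-1) (by norm_num), inner_ss]
                simp [hkl, hkl.symm]; try norm_num)
            (by push_cast; module)
      · exact leafS n _ _ d₁ (-d₁) d₂ i l (fun h => hli h.symm) (zsign_neg hd₁) hd₂
          (by rw [scalar_short n i k hij d₁ hd₁, inner_ss]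
              simp [hki, hli, hkl.symm]; try push_cast; try ring)
          (by push_cast
              rw [show ((d₁:ℝ))•(ee n i + (d₁:ℝ) • ee n k)
                  = (d₁:ℝ)•ee n i + ((d₁:ℝ)*(d₁:ℝ))•ee n k by module, zsign_sq hd₁]
              module)
    · by_cases hli : l = i
      · subst hli
        exact leafS n _ _ d₂ 1 (-(d₂*d₁)) k j hkj (by norm_num)
          (zsign_neg (zsign_mul hd₂ hd₁))
          (by rw [scalar_short n l j hij d₁ hd₁, inner_ss]
              simp [hkl, hkj, hij, hij.symm]; try push_cast; try ring)
          (by push_cast; module)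
      · by_cases hlj : l = j
        · subst hlj
          exact leafS n _ _ (d₂*d₁) 1 (-(d₂*d₁)) k i hki (by norm_num)
            (zsign_neg (zsign_mul hd₂ hd₁))
            (by rw [scalar_short n i l hij d₁ hd₁, inner_ss]
                simp [hki, hkl, hli]; try push_cast; try ring)
            (by push_cast
                rw [show ((d₂:ℝ)*(d₁:ℝ))•(ee n i + (d₁:ℝ) • ee n l)
                    = ((d₂:ℝ)*(d₁:ℝ))•ee n i + ((d₂:ℝ)*((d₁:ℝ)*(d₁:ℝ)))•ee n l by module,
                  zsign_sq hd₁]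
                module)
        · exact leafS n _ _ 0 1 d₂ k l hkl (by norm_num) hd₂
            (by rw [scalar_short n i j hij d₁ hd₁, inner_ss]
                simp [hki, hkj, hli, hlj])
            (by push_cast; module)


lemma reflV_neg_left {V : Type*} [NormedAddCommGroup V] [InnerProductSpace ℝ V] (α β : V) :
    reflV (-α) β = reflV α β := by
  simp only [reflV, inner_neg_neg, inner_neg_right, inner_neg_left]
  match_scalars <;> ring

lemma reflV_neg_right {V : Type*} [NormedAddCommGroup V] [InnerProductSpace ℝ V] (α β : V) :
    reflV α (-β) = -reflV α β := by
  simp only [reflV, inner_neg_left]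
  match_scalars <;> ring

lemma rsign_neg {x : ℝ} (h : x = 1 ∨ x = -1) : (-x = 1 ∨ -x = -1) := by
  rcases h with rfl|rfl <;> norm_num

lemma pmEE_normal {n : ℕ} {v : EuclideanSpace ℝ (Fin n)} (h : v ∈ pmEE n) :
    ∃ (i j : Fin n) (d s : ℤ), i ≠ j ∧ (d = 1 ∨ d = -1) ∧ (s = 1 ∨ s = -1) ∧
      v = (s:ℝ) • (ee n i + (d:ℝ) • ee n j) := by
  obtain ⟨i, j, hij, ε, δ, hε, hδ, rfl⟩ := h
  rcases hε with rfl|rfl <;> rcases hδ with rfl|rfl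
  · exact ⟨i, j, 1, 1, hij, Or.inl rfl, Or.inl rfl, by push_cast; module⟩
  · exact ⟨i, j, -1, 1, hij, Or.inr rfl, Or.inl rfl, by push_cast; module⟩
  · exact ⟨i, j, -1, -1, hij, Or.inr rfl, Or.inr rfl, by push_cast; module⟩
  · exact ⟨i, j, 1, -1, hij, Or.inl rfl, Or.inr rfl, by push_cast; module⟩

lemma pm2E_normal {n : ℕ} {v : EuclideanSpace ℝ (Fin n)} (h : v ∈ pm2E n) :
    ∃ (i : Fin n) (s : ℤ), (s = 1 ∨ s = -1) ∧ v = (s:ℝ) • ((2:ℝ) • ee n i) := by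
  obtain ⟨i, h|h⟩ := h
  · exact ⟨i, 1, Or.inl rfl, by rw [h]; push_cast; module⟩
  · exact ⟨i, -1, Or.inr rfl, by rw [h]; push_cast; module⟩

lemma pmEE_smul_sign {n : ℕ} {v : EuclideanSpace ℝ (Fin n)} (h : v ∈ pmEE n)
    {s : ℤ} (hs : s = 1 ∨ s = -1) : (s:ℝ) • v ∈ pmEE n := by
  obtain ⟨i, j, hij, ε, δ, hε, hδ, rfl⟩ := h
  rcases hs with rfl|rfl
  · exact ⟨i, j, hij, ε, δ, hε, hδ, by push_cast; module⟩
  · exact ⟨i, j, hij, -ε, -δ, rsign_neg hε, rsign_neg hδ, by push_cast; module⟩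

lemma pm2E_smul_sign {n : ℕ} {v : EuclideanSpace ℝ (Fin n)} (h : v ∈ pm2E n)
    {s : ℤ} (hs : s = 1 ∨ s = -1) : (s:ℝ) • v ∈ pm2E n := by
  obtain ⟨i, h|h⟩ := h <;> rcases hs with rfl|rfl
  · exact ⟨i, Or.inl (by rw [h]; push_cast; module)⟩
  · exact ⟨i, Or.inr (by rw [h]; push_cast; module)⟩
  · exact ⟨i, Or.inr (by rw [h]; push_cast; module)⟩
  · exact ⟨i, Or.inl (by rw [h]; push_cast; module)⟩

lemma reflV_sleft {V : Type*} [NormedAddCommGroup V] [InnerProductSpace ℝ V]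
    {s : ℤ} (hs : s = 1 ∨ s = -1) (α β : V) : reflV ((s:ℝ) • α) β = reflV α β := by
  rcases hs with rfl|rfl
  · norm_num
  · push_cast
    rw [show ((-1:ℝ)) • α = -α by module, reflV_neg_left]

lemma reflV_sright {V : Type*} [NormedAddCommGroup V] [InnerProductSpace ℝ V]
    {s : ℤ} (hs : s = 1 ∨ s = -1) (α β : V) : reflV α ((s:ℝ) • β) = (s:ℝ) • reflV α β := by
  rcases hs with rfl|rfl
  · norm_num
  · push_cast
    rw [show ((-1:ℝ)) • β = -β by module, reflV_neg_right]; module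

lemma scalar_smul_sign {V : Type*} [NormedAddCommGroup V] [InnerProductSpace ℝ V]
    {s t : ℤ} (hs : s = 1 ∨ s = -1) (α β : V) :
    2 * ⟪(t:ℝ) • β, (s:ℝ) • α⟫ / ⟪(s:ℝ) • α, (s:ℝ) • α⟫
      = ((s:ℝ) * (t:ℝ)) * (2 * ⟪β, α⟫ / ⟪α, α⟫) := by
  rw [real_inner_smul_left, real_inner_smul_right, real_inner_smul_left,
    real_inner_smul_right, ← mul_assoc ((s:ℝ)), zsign_sq hs, one_mul]
  ring

lemma coreSS {n : ℕ} {α β : EuclideanSpace ℝ (Fin n)} (hα : α ∈ pmEE n) (hβ : β ∈ pmEE n) :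
    ∃ m : ℤ, 2 * ⟪β, α⟫ / ⟪α, α⟫ = (m:ℝ) ∧ reflV α β ∈ pmEE n := by
  obtain ⟨i, j, d₁, s₁, hij, hd₁, hs₁, rfl⟩ := pmEE_normal hα
  obtain ⟨k, l, d₂, s₂, hkl, hd₂, hs₂, rfl⟩ := pmEE_normal hβ
  obtain ⟨m, hm, hmem⟩ := coreSS1 n i j k l hij hkl d₁ d₂ hd₁ hd₂
  refine ⟨s₁*s₂*m, ?_, ?_⟩
  · rw [scalar_smul_sign hs₁, hm]; push_cast; ring
  · rw [reflV_sleft hs₁, reflV_sright hs₂]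
    exact pmEE_smul_sign hmem hs₂

lemma coreSL1 (n : ℕ) (i j k : Fin n) (hij : i ≠ j) (d₁ : ℤ)
    (hd₁ : d₁ = 1 ∨ d₁ = -1) :
    ∃ m : ℤ,
      2 * ⟪(2:ℝ) • ee n k, ee n i + (d₁:ℝ) • ee n j⟫
          / ⟪ee n i + (d₁:ℝ) • ee n j, ee n i + (d₁:ℝ) • ee n j⟫ = ((2*m : ℤ):ℝ) ∧
      reflV (ee n i + (d₁:ℝ) • ee n j) ((2:ℝ) • ee n k) ∈ pm2E n := by
  by_cases hki : k = i
  · subst hki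
    exact leafL n _ _ 1 (-d₁) j (zsign_neg hd₁)
      (by rw [scalar_short n k j hij d₁ hd₁, inner_sl]; simp [hij]; try norm_num)
      (by push_cast; module)
  · by_cases hkj : k = j
    · subst hkj
      exact leafL n _ _ d₁ (-d₁) i (zsign_neg hd₁)
        (by rw [scalar_short n i k hij d₁ hd₁, inner_sl]; simp [hki]; try push_cast; try ring)
        (by push_cast
            rw [show ((2:ℝ)*(d₁:ℝ))•(ee n i + (d₁:ℝ) • ee n k)
                = (2*(d₁:ℝ))•ee n i + (2*((d₁:ℝ)*(d₁:ℝ)))•ee n k by module, zsign_sq hd₁]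
            module)
    · exact leafL n _ _ 0 1 k (by norm_num)
        (by rw [scalar_short n i j hij d₁ hd₁, inner_sl]; simp [hki, hkj])
        (by push_cast; module)

lemma coreLS1 (n : ℕ) (i k l : Fin n) (hkl : k ≠ l) (d₂ : ℤ)
    (hd₂ : d₂ = 1 ∨ d₂ = -1) :
    ∃ m : ℤ,
      2 * ⟪ee n k + (d₂:ℝ) • ee n l, (2:ℝ) • ee n i⟫ / ⟪(2:ℝ) • ee n i, (2:ℝ) • ee n i⟫
        = (m:ℝ) ∧
      reflV ((2:ℝ) • ee n i) (ee n k + (d₂:ℝ) • ee n l) ∈ pmEE n := by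
  by_cases hki : k = i
  · subst hki
    exact leafS n _ _ 1 (-1) d₂ k l hkl (by norm_num) hd₂
      (by rw [scalar_long, inner_ls]; simp [hkl.symm]; try norm_num)
      (by push_cast; module)
  · by_cases hli : l = i
    · subst hli
      exact leafS n _ _ d₂ 1 (-d₂) k l hkl (by norm_num) (zsign_neg hd₂)
        (by rw [scalar_long, inner_ls]; simp [hki]; try push_cast; try ring)
        (by push_cast; module)
    · exact leafS n _ _ 0 1 d₂ k l hkl (by norm_num) hd₂
        (by rw [scalar_long, inner_ls]; simp [hki, hli])
        (by push_cast; module)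

lemma coreLL1 (n : ℕ) (i k : Fin n) :
    ∃ m : ℤ,
      2 * ⟪(2:ℝ) • ee n k, (2:ℝ) • ee n i⟫ / ⟪(2:ℝ) • ee n i, (2:ℝ) • ee n i⟫
        = ((2*m : ℤ):ℝ) ∧
      reflV ((2:ℝ) • ee n i) ((2:ℝ) • ee n k) ∈ pm2E n := by
  by_cases hki : k = i
  · subst hki
    exact leafL n _ _ 1 (-1) k (by norm_num)
      (by rw [scalar_long, inner_ll]; simp; try norm_num)
      (by push_cast; module)
  · exact leafL n _ _ 0 1 k (by norm_num)
      (by rw [scalar_long, inner_ll]; simp [hki])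
      (by push_cast; module)

lemma coreSL {n : ℕ} {α β : EuclideanSpace ℝ (Fin n)} (hα : α ∈ pmEE n) (hβ : β ∈ pm2E n) :
    ∃ m : ℤ, 2 * ⟪β, α⟫ / ⟪α, α⟫ = ((2*m:ℤ):ℝ) ∧ reflV α β ∈ pm2E n := by
  obtain ⟨i, j, d₁, s₁, hij, hd₁, hs₁, rfl⟩ := pmEE_normal hα
  obtain ⟨k, s₂, hs₂, rfl⟩ := pm2E_normal hβ
  obtain ⟨m, hm, hmem⟩ := coreSL1 n i j k hij d₁ hd₁
  refine ⟨s₁*s₂*m, ?_, ?_⟩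
  · rw [scalar_smul_sign hs₁, hm]; push_cast; ring
  · rw [reflV_sleft hs₁, reflV_sright hs₂]
    exact pm2E_smul_sign hmem hs₂

lemma coreLS {n : ℕ} {α β : EuclideanSpace ℝ (Fin n)} (hα : α ∈ pm2E n) (hβ : β ∈ pmEE n) :
    ∃ m : ℤ, 2 * ⟪β, α⟫ / ⟪α, α⟫ = (m:ℝ) ∧ reflV α β ∈ pmEE n := by
  obtain ⟨i, s₁, hs₁, rfl⟩ := pm2E_normal hα
  obtain ⟨k, l, d₂, s₂, hkl, hd₂, hs₂, rfl⟩ := pmEE_normal hβ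
  obtain ⟨m, hm, hmem⟩ := coreLS1 n i k l hkl d₂ hd₂
  refine ⟨s₁*s₂*m, ?_, ?_⟩
  · rw [scalar_smul_sign hs₁, hm]; push_cast; ring
  · rw [reflV_sleft hs₁, reflV_sright hs₂]
    exact pmEE_smul_sign hmem hs₂

lemma coreLL {n : ℕ} {α β : EuclideanSpace ℝ (Fin n)} (hα : α ∈ pm2E n) (hβ : β ∈ pm2E n) :
    ∃ m : ℤ, 2 * ⟪β, α⟫ / ⟪α, α⟫ = ((2*m:ℤ):ℝ) ∧ reflV α β ∈ pm2E n := by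
  obtain ⟨i, s₁, hs₁, rfl⟩ := pm2E_normal hα
  obtain ⟨k, s₂, hs₂, rfl⟩ := pm2E_normal hβ
  obtain ⟨m, hm, hmem⟩ := coreLL1 n i k
  refine ⟨s₁*s₂*m, ?_, ?_⟩
  · rw [scalar_smul_sign hs₁, hm]; push_cast; ring
  · rw [reflV_sleft hs₁, reflV_sright hs₂]
    exact pm2E_smul_sign hmem hs₂

lemma pmEE_norm2 {n : ℕ} {v : EuclideanSpace ℝ (Fin n)} (h : v ∈ pmEE n) :
    ⟪v, v⟫ = (2:ℝ) := by
  obtain ⟨i, j, d, s, hij, hd, hs, rfl⟩ := pmEE_normal h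
  rw [real_inner_smul_left, real_inner_smul_right, ← mul_assoc, zsign_sq hs, one_mul,
    snorm n i j hij d hd]

lemma pm2E_norm4 {n : ℕ} {v : EuclideanSpace ℝ (Fin n)} (h : v ∈ pm2E n) :
    ⟪v, v⟫ = (4:ℝ) := by
  obtain ⟨i, s, hs, rfl⟩ := pm2E_normal h
  rw [real_inner_smul_left, real_inner_smul_right, ← mul_assoc, zsign_sq hs, one_mul,
    lnorm n i]

lemma pmEE_disj {n : ℕ} {v : EuclideanSpace ℝ (Fin n)} (h : v ∈ pmEE n) (h' : v ∈ pm2E n) :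
    False := by
  have := pmEE_norm2 h
  have := pm2E_norm4 h'
  linarith

lemma reflA_eq' {V Y : Type*} [NormedAddCommGroup V] [InnerProductSpace ℝ V]
    [AddCommGroup Y] [Module ℝ Y] (a1 : V) (a2 : Y) (b1 : V) (b2 : Y) :
    reflA (a1, a2) (b1, b2) = (reflV a1 b1, b2 - (2 * ⟪b1, a1⟫ / ⟪a1, a1⟫) • a2) := rfl

/-- gradient `C_n`, `n ≥ 3`: if `Λ_ℓ ≠ 2Λ_s`, `p` is ℤ-linear with
`p(α) ∈ Λ_s` for short `α`, and `S` is maximal among the subsets described by `CGoodT`,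
then `Ψ = (Φ̊_s ⊕ Λ_s) ∪ {(α, p(α)+s) : α long, s ∈ S}` is a maximal root subsystem. -/
theorem stmt_4 (n : ℕ) (hn : 3 ≤ n) (Y : Type*) [AddCommGroup Y] [Module ℝ Y]
    [FiniteDimensional ℝ Y]
    (Λs : AddSubgroup Y) (hspan : Submodule.span ℝ (Λs : Set Y) = ⊤)
    (Λℓ : Set Y) (h0ℓ : (0 : Y) ∈ Λℓ) (hℓs : Λℓ ⊆ (Λs : Set Y))
    (hℓneg : ∀ x ∈ Λℓ, -x ∈ Λℓ)
    (hℓ2 : ∀ x ∈ Λℓ, ∀ y ∈ Λs, x + 2 • y ∈ Λℓ)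
    (Φ : Set (EuclideanSpace ℝ (Fin n) × Y))
    (hΦ : Φ = {x | x.1 ∈ pmEE n ∧ x.2 ∈ Λs} ∪ {x | x.1 ∈ pm2E n ∧ x.2 ∈ Λℓ})
    (hne : Λℓ ≠ {y | ∃ x ∈ Λs, y = 2 • x})
    (p : EuclideanSpace ℝ (Fin n) → Y)
    (hlin : IsZLin (pmEE n ∪ pm2E n) p)
    (hps : ∀ α ∈ pmEE n, p α ∈ Λs)
    (S : Set Y) (hS : CGoodT n Λs Λℓ p S)
    (hSmax : ∀ T : Set Y, CGoodT n Λs Λℓ p T → S ⊆ T → T = S)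
    (Ψ : Set (EuclideanSpace ℝ (Fin n) × Y))
    (hΨ : Ψ = {x | x.1 ∈ pmEE n ∧ x.2 ∈ Λs} ∪
      {x | ∃ α ∈ pm2E n, ∃ s ∈ S, x = (α, p α + s)}) :
    IsMaximalRootSubsystem reflA Φ Ψ := by
  subst hΦ hΨ
  obtain ⟨hS1, hS2, hS3, hS4⟩ := hS
  obtain ⟨i0, i1, h01⟩ : ∃ i0 i1 : Fin n, i0 ≠ i1 :=
    ⟨⟨0, by omega⟩, ⟨1, by omega⟩, Fin.ne_of_val_ne (by norm_num)⟩
  have hα₀mem : (2:ℝ) • ee n i0 ∈ pm2E n := ⟨i0, Or.inl rfl⟩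
  have hr2 : ∀ y : Y, (2:ℝ) • y = 2 • y := fun y => by
    rw [show (2:ℝ) = ((2:ℕ):ℝ) by norm_num, Nat.cast_smul_eq_nsmul]
  have h2z : ∀ (m : ℤ) (y : Y), ((2*m:ℤ):ℝ) • y = 2 • (m • y) := fun m y => by
    rw [Int.cast_smul_eq_zsmul, mul_smul, two_smul, two_smul]
  have hzz : ∀ (m : ℤ) (y : Y), ((m:ℤ):ℝ) • y = m • y := fun m y =>
    Int.cast_smul_eq_zsmul ℝ m y
  have h0S : (0:Y) ∈ S := by have := hS1 0 Λs.zero_mem; simpa using this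
  have hpΛℓ : ∀ α ∈ pm2E n, p α ∈ Λℓ := fun α hα => by
    have := hS3 α hα 0 h0S; simpa using this
  have hpΛs : ∀ α ∈ pm2E n, p α ∈ Λs := fun α hα => hℓs (hpΛℓ α hα)
  -- closure of Ψ under reflections, target short
  have hreflS : ∀ (a1 : EuclideanSpace ℝ (Fin n)) (a2 : Y), a1 ∈ pmEE n ∪ pm2E n →
      a2 ∈ Λs → ∀ (b1 : EuclideanSpace ℝ (Fin n)) (b2 : Y), b1 ∈ pmEE n → b2 ∈ Λs →
      reflA (a1, a2) (b1, b2) ∈ {x : EuclideanSpace ℝ (Fin n) × Y | x.1 ∈ pmEE n ∧ x.2 ∈ Λs} ∪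
        {x | ∃ α ∈ pm2E n, ∃ s ∈ S, x = (α, p α + s)} := by
    intro a1 a2 ha1 ha2 b1 b2 hb1 hb2
    obtain ⟨m, hc, hmem⟩ : ∃ m : ℤ, 2 * ⟪b1, a1⟫ / ⟪a1, a1⟫ = (m:ℝ) ∧ reflV a1 b1 ∈ pmEE n := by
      rcases ha1 with h|h
      · exact coreSS h hb1
      · exact coreLS h hb1
    rw [reflA_eq']
    exact Set.mem_union_left _
      ⟨hmem, by rw [hc, hzz]; exact Λs.sub_mem hb2 (Λs.zsmul_mem ha2 m)⟩
  -- closure of Ψ under reflections, target long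
  have hreflL : ∀ (a1 : EuclideanSpace ℝ (Fin n)) (a2 : Y), a1 ∈ pmEE n ∪ pm2E n →
      a2 ∈ Λs → p a1 ∈ Λs → ∀ αb ∈ pm2E n, ∀ sb ∈ S,
      reflA (a1, a2) (αb, p αb + sb) ∈ {x : EuclideanSpace ℝ (Fin n) × Y | x.1 ∈ pmEE n ∧ x.2 ∈ Λs} ∪
        {x | ∃ α ∈ pm2E n, ∃ s ∈ S, x = (α, p α + s)} := by
    intro a1 a2 ha1 ha2 hpa1 αb hαb sb hsb
    obtain ⟨m, hc, hmem⟩ : ∃ m : ℤ, 2 * ⟪αb, a1⟫ / ⟪a1, a1⟫ = ((2*m:ℤ):ℝ) ∧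
        reflV a1 αb ∈ pm2E n := by
      rcases ha1 with h|h
      · exact coreSL h hαb
      · exact coreLL h hαb
    rw [reflA_eq']
    refine Set.mem_union_right _ ⟨reflV a1 αb, hmem, sb + 2 • (m • (p a1 - a2)),
      hS2 sb hsb _ (Λs.zsmul_mem (Λs.sub_mem hpa1 ha2) m), ?_⟩
    have hp := hlin a1 ha1 αb (Set.mem_union_right _ hαb)
    refine Prod.ext rfl ?_
    show p αb + sb - (2 * ⟪αb, a1⟫ / ⟪a1, a1⟫) • a2
        = p (reflV a1 αb) + (sb + 2 • (m • (p a1 - a2)))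
    rw [hp, hc, ← h2z m (p a1 - a2)]
    push_cast
    module
  refine ⟨⟨?_, ?_, ?_⟩, ?_, ?_⟩
  · -- nonempty
    refine ⟨(ee n i0 + ee n i1, 0), Set.mem_union_left _ ⟨?_, Λs.zero_mem⟩⟩
    exact mem_pmEE' n i0 i1 h01 1 1 (Or.inl rfl) (Or.inl rfl) _ (by push_cast; module)
  · -- Ψ ⊆ Φ
    rintro ⟨x1, x2⟩ (⟨h1, h2⟩|⟨α, hα, s, hs, heq⟩)
    · exact Set.mem_union_left _ ⟨h1, h2⟩
    · injection heq with e1 e2; subst e1; subst e2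
      exact Set.mem_union_right _ ⟨hα, hS3 _ hα _ hs⟩
  · -- closure
    rintro ⟨a1, a2⟩ ha ⟨b1, b2⟩ hb
    obtain ⟨hau, ha2, hpa⟩ : a1 ∈ pmEE n ∪ pm2E n ∧ a2 ∈ Λs ∧ p a1 ∈ Λs := by
      rcases ha with ⟨h1, h2⟩|⟨α, hα, s, hs, heq⟩
      · exact ⟨Or.inl h1, h2, hps a1 h1⟩
      · injection heq with e1 e2; subst e1; subst e2
        exact ⟨Or.inr hα, hℓs (hS3 _ hα _ hs), hpΛs _ hα⟩
    rcases hb with ⟨h1, h2⟩|⟨β, hβ, s, hs, heq⟩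
    · exact hreflS a1 a2 hau ha2 b1 b2 h1 h2
    · injection heq with e1 e2; subst e1; subst e2
      exact hreflL a1 a2 hau ha2 hpa b1 hβ s hs
  · -- Ψ ≠ Φ
    have hsubset : {y | ∃ t ∈ S, y = p ((2:ℝ) • ee n i0) + t} ⊆ Λℓ := by
      rintro y ⟨t, ht, rfl⟩; exact hS3 _ hα₀mem t ht
    have hex : ∃ μ ∈ Λℓ, μ ∉ {y | ∃ t ∈ S, y = p ((2:ℝ) • ee n i0) + t} := by
      by_contra hcon
      push_neg at hcon
      exact hS4 ((2:ℝ) • ee n i0) hα₀mem (Set.Subset.antisymm hsubset hcon)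
    obtain ⟨μ, hμ, hμn⟩ := hex
    intro h
    have hmem : (((2:ℝ) • ee n i0, μ) : EuclideanSpace ℝ (Fin n) × Y) ∈
        {x : EuclideanSpace ℝ (Fin n) × Y | x.1 ∈ pmEE n ∧ x.2 ∈ Λs} ∪
        {x | ∃ α ∈ pm2E n, ∃ s ∈ S, x = (α, p α + s)} := by
      rw [h]; exact Set.mem_union_right _ ⟨hα₀mem, hμ⟩
    rcases hmem with ⟨h1, _⟩|⟨α, hα, s, hs, heq⟩
    · exact pmEE_disj h1 hα₀mem
    · injection heq with e1 e2
      subst e1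
      exact hμn ⟨s, hs, e2⟩
  · -- maximality
    intro Ψ' hΨ'sys hsubΨ hneq
    obtain ⟨-, hΨ'Φ, hcl'⟩ := hΨ'sys
    have hshortΨ' : ∀ β ∈ pmEE n, ∀ lam ∈ Λs, ((β, lam) : EuclideanSpace ℝ (Fin n) × Y) ∈ Ψ' :=
      fun β hβ lam hlam => hsubΨ (Set.mem_union_left _ ⟨hβ, hlam⟩)
    have move : ∀ β ∈ pmEE n, ∀ α ∈ pm2E n, ∀ μ : Y, (α, μ) ∈ Ψ' →
        (reflV β α, μ + (p (reflV β α) - p α)) ∈ Ψ' := by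
      intro β hβ α hα μ h
      have h1 := hcl' (β, p β) (hshortΨ' β hβ _ (hps β hβ)) (α, μ) h
      rw [reflA_eq'] at h1
      have h2 : μ - (2 * ⟪α, β⟫ / ⟪β, β⟫) • p β = μ + (p (reflV β α) - p α) := by
        rw [hlin β (Set.mem_union_left _ hβ) α (Set.mem_union_right _ hα)]; abel
      rwa [h2] at h1
    -- explicit reflections
    have hBm : ∀ k, i0 ≠ k → ee n i0 + (-1:ℝ) • ee n k ∈ pmEE n := fun k h =>
      mem_pmEE' n i0 k h 1 (-1) (Or.inl rfl) (Or.inr rfl) _ (by push_cast; module)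
    have hBp : ∀ k, i0 ≠ k → ee n i0 + (1:ℝ) • ee n k ∈ pmEE n := fun k h =>
      mem_pmEE' n i0 k h 1 1 (Or.inl rfl) (Or.inl rfl) _ (by push_cast; module)
    have hden : ∀ (x : ℝ), (x = 1 ∨ x = -1) → ∀ k, i0 ≠ k →
        ⟪ee n i0 + x • ee n k, ee n i0 + x • ee n k⟫ = (2:ℝ) := by
      intro x hx k hk
      rw [inner_ss]
      rcases hx with rfl|rfl <;> simp [hk, hk.symm] <;> norm_num
    have hs1 : ∀ k, i0 ≠ k → 2 * ⟪(2:ℝ) • ee n i0, ee n i0 + (-1:ℝ) • ee n k⟫ /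
        ⟪ee n i0 + (-1:ℝ) • ee n k, ee n i0 + (-1:ℝ) • ee n k⟫ = (2:ℝ) := by
      intro k h
      rw [inner_sl, hden (-1) (Or.inr rfl) k h]
      simp [h]
    have hs2 : ∀ k, i0 ≠ k → 2 * ⟪(2:ℝ) • ee n k, ee n i0 + (-1:ℝ) • ee n k⟫ /
        ⟪ee n i0 + (-1:ℝ) • ee n k, ee n i0 + (-1:ℝ) • ee n k⟫ = (-2:ℝ) := by
      intro k h
      rw [inner_sl, hden (-1) (Or.inr rfl) k h]
      simp [h.symm]
      norm_num
    have hs3 : ∀ k, i0 ≠ k → 2 * ⟪(2:ℝ) • ee n i0, ee n i0 + (1:ℝ) • ee n k⟫ /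
        ⟪ee n i0 + (1:ℝ) • ee n k, ee n i0 + (1:ℝ) • ee n k⟫ = (2:ℝ) := by
      intro k h
      rw [inner_sl, hden 1 (Or.inl rfl) k h]
      simp [h]
    have hs4 : ∀ k, i0 ≠ k → 2 * ⟪-((2:ℝ) • ee n k), ee n i0 + (1:ℝ) • ee n k⟫ /
        ⟪ee n i0 + (1:ℝ) • ee n k, ee n i0 + (1:ℝ) • ee n k⟫ = (-2:ℝ) := by
      intro k h
      rw [inner_neg_left, inner_sl, hden 1 (Or.inl rfl) k h]
      simp [h.symm]
      norm_num
    have hs5 : 2 * ⟪-((2:ℝ) • ee n i0), ee n i0 + (1:ℝ) • ee n i1⟫ /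
        ⟪ee n i0 + (1:ℝ) • ee n i1, ee n i0 + (1:ℝ) • ee n i1⟫ = (-2:ℝ) := by
      rw [inner_neg_left, inner_sl, hden 1 (Or.inl rfl) i1 h01]
      simp [h01]
      norm_num
    have hs6 : 2 * ⟪(2:ℝ) • ee n i1, ee n i0 + (1:ℝ) • ee n i1⟫ /
        ⟪ee n i0 + (1:ℝ) • ee n i1, ee n i0 + (1:ℝ) • ee n i1⟫ = (2:ℝ) := by
      rw [inner_sl, hden 1 (Or.inl rfl) i1 h01]
      simp [h01.symm]
    have e1 : ∀ k, (h : i0 ≠ k) → reflV (ee n i0 + (-1:ℝ) • ee n k) ((2:ℝ) • ee n i0)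
        = (2:ℝ) • ee n k := by
      intro k h; rw [reflV, hs1 k h]; module
    have e2 : ∀ k, (h : i0 ≠ k) → reflV (ee n i0 + (-1:ℝ) • ee n k) ((2:ℝ) • ee n k)
        = (2:ℝ) • ee n i0 := by
      intro k h; rw [reflV, hs2 k h]; module
    have e3 : ∀ k, (h : i0 ≠ k) → reflV (ee n i0 + (1:ℝ) • ee n k) ((2:ℝ) • ee n i0)
        = -((2:ℝ) • ee n k) := by
      intro k h; rw [reflV, hs3 k h]; module
    have e4 : ∀ k, (h : i0 ≠ k) → reflV (ee n i0 + (1:ℝ) • ee n k) (-((2:ℝ) • ee n k))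
        = (2:ℝ) • ee n i0 := by
      intro k h; rw [reflV, hs4 k h]; module
    have e5 : reflV (ee n i0 + (1:ℝ) • ee n i1) (-((2:ℝ) • ee n i0)) = (2:ℝ) • ee n i1 := by
      rw [reflV, hs5]; module
    have e7 : reflV (ee n i0 + (1:ℝ) • ee n i1) ((2:ℝ) • ee n i1) = -((2:ℝ) • ee n i0) := by
      rw [reflV, hs6]; module
    -- the translation set T
    set T : Set Y :=
      {t | (((2:ℝ) • ee n i0, p ((2:ℝ) • ee n i0) + t) : EuclideanSpace ℝ (Fin n) × Y) ∈ Ψ'}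
      with hTdef
    have hST : S ⊆ T := fun s hs =>
      hsubΨ (Set.mem_union_right _ ⟨_, hα₀mem, s, hs, rfl⟩)
    have hfromT : ∀ t ∈ T, ∀ α ∈ pm2E n, (α, p α + t) ∈ Ψ' := by
      intro t ht α hα
      have ht' : (((2:ℝ) • ee n i0, p ((2:ℝ) • ee n i0) + t) :
          EuclideanSpace ℝ (Fin n) × Y) ∈ Ψ' := ht
      obtain ⟨k, hk|hk⟩ := hα <;> subst hk
      · by_cases h : i0 = k
        · subst h; exact ht'
        · have h1 := move _ (hBm k h) _ hα₀mem _ ht'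
          rw [e1 k h] at h1
          rwa [show p ((2:ℝ) • ee n k) + t = p ((2:ℝ) • ee n i0) + t +
            (p ((2:ℝ) • ee n k) - p ((2:ℝ) • ee n i0)) by abel]
      · by_cases h : i0 = k
        · subst h
          have h1 := move _ (hBm i1 h01) _ hα₀mem _ ht'
          rw [e1 i1 h01] at h1
          have h2 := move _ (hBp i1 h01) _ ⟨i1, Or.inl rfl⟩ _ h1
          rw [e7] at h2
          rwa [show p (-((2:ℝ) • ee n i0)) + t = p ((2:ℝ) • ee n i0) + t +
            (p ((2:ℝ) • ee n i1) - p ((2:ℝ) • ee n i0)) +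
            (p (-((2:ℝ) • ee n i0)) - p ((2:ℝ) • ee n i1)) by abel]
        · have h1 := move _ (hBp k h) _ hα₀mem _ ht'
          rw [e3 k h] at h1
          rwa [show p (-((2:ℝ) • ee n k)) + t = p ((2:ℝ) • ee n i0) + t +
            (p (-((2:ℝ) • ee n k)) - p ((2:ℝ) • ee n i0)) by abel]
    have htoT : ∀ α ∈ pm2E n, ∀ μ : Y, (α, μ) ∈ Ψ' → μ - p α ∈ T := by
      intro α hα μ h
      obtain ⟨k, hk|hk⟩ := hα <;> subst hk
      · by_cases hk0 : i0 = k
        · subst hk0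
          show (((2:ℝ) • ee n i0, p ((2:ℝ) • ee n i0) + (μ - p ((2:ℝ) • ee n i0))) :
            EuclideanSpace ℝ (Fin n) × Y) ∈ Ψ'
          rwa [show p ((2:ℝ) • ee n i0) + (μ - p ((2:ℝ) • ee n i0)) = μ by abel]
        · have h1 := move _ (hBm k hk0) _ ⟨k, Or.inl rfl⟩ _ h
          rw [e2 k hk0] at h1
          show (((2:ℝ) • ee n i0, p ((2:ℝ) • ee n i0) + (μ - p ((2:ℝ) • ee n k))) :
            EuclideanSpace ℝ (Fin n) × Y) ∈ Ψ'
          rwa [show p ((2:ℝ) • ee n i0) + (μ - p ((2:ℝ) • ee n k)) =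
            μ + (p ((2:ℝ) • ee n i0) - p ((2:ℝ) • ee n k)) by abel]
      · by_cases hk0 : i0 = k
        · subst hk0
          have h1 := move _ (hBp i1 h01) _ ⟨i0, Or.inr rfl⟩ _ h
          rw [e5] at h1
          have h2 := move _ (hBm i1 h01) _ ⟨i1, Or.inl rfl⟩ _ h1
          rw [e2 i1 h01] at h2
          show (((2:ℝ) • ee n i0, p ((2:ℝ) • ee n i0) + (μ - p (-((2:ℝ) • ee n i0)))) :
            EuclideanSpace ℝ (Fin n) × Y) ∈ Ψ'
          rwa [show p ((2:ℝ) • ee n i0) + (μ - p (-((2:ℝ) • ee n i0))) =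
            μ + (p ((2:ℝ) • ee n i1) - p (-((2:ℝ) • ee n i0))) +
            (p ((2:ℝ) • ee n i0) - p ((2:ℝ) • ee n i1)) by abel]
        · have h1 := move _ (hBp k hk0) _ ⟨k, Or.inr rfl⟩ _ h
          rw [e4 k hk0] at h1
          show (((2:ℝ) • ee n i0, p ((2:ℝ) • ee n i0) + (μ - p (-((2:ℝ) • ee n k)))) :
            EuclideanSpace ℝ (Fin n) × Y) ∈ Ψ'
          rwa [show p ((2:ℝ) • ee n i0) + (μ - p (-((2:ℝ) • ee n k))) =
            μ + (p ((2:ℝ) • ee n i0) - p (-((2:ℝ) • ee n k))) by abel]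
    have hTadd : ∀ t ∈ T, ∀ x ∈ Λs, t + 2 • x ∈ T := by
      intro t ht x hx
      have ht' : (((2:ℝ) • ee n i0, p ((2:ℝ) • ee n i0) + t) :
          EuclideanSpace ℝ (Fin n) × Y) ∈ Ψ' := ht
      have ha := hshortΨ' _ (hBp i1 h01) (-x) (Λs.neg_mem hx)
      have h1 := hcl' _ ha _ ht'
      rw [reflA_eq'] at h1
      rw [e3 i1 h01, hs3 i1 h01] at h1
      have hb0 := hshortΨ' _ (hBp i1 h01) 0 Λs.zero_mem
      have h2 := hcl' _ hb0 _ h1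
      rw [reflA_eq'] at h2
      rw [e4 i1 h01, smul_zero, sub_zero] at h2
      show (((2:ℝ) • ee n i0, p ((2:ℝ) • ee n i0) + (t + 2 • x)) :
        EuclideanSpace ℝ (Fin n) × Y) ∈ Ψ'
      rwa [show p ((2:ℝ) • ee n i0) + (t + 2 • x) =
        p ((2:ℝ) • ee n i0) + t - (2:ℝ) • (-x) by rw [hr2]; abel]
    have hpd : ∀ α ∈ pm2E n, ∃ w, w ∈ Λs ∧ p α = p ((2:ℝ) • ee n i0) + (2:ℝ) • w := by
      intro α hα
      obtain ⟨k, hk|hk⟩ := hα <;> subst hk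
      · by_cases h : i0 = k
        · subst h
          exact ⟨0, Λs.zero_mem, by rw [smul_zero, add_zero]⟩
        · refine ⟨-p (ee n i0 + (-1:ℝ) • ee n k), Λs.neg_mem (hps _ (hBm k h)), ?_⟩
          have hl := hlin _ (Set.mem_union_left _ (hBm k h)) _
            (Set.mem_union_right _ hα₀mem)
          rw [e1 k h, hs1 k h] at hl
          rw [hl]; module
      · by_cases h : i0 = k
        · subst h
          have hl1 := hlin _ (Set.mem_union_left _ (hBm i1 h01)) _
            (Set.mem_union_right _ hα₀mem)
          rw [e1 i1 h01, hs1 i1 h01] at hl1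
          have hl2 := hlin _ (Set.mem_union_left _ (hBp i1 h01)) _
            (Set.mem_union_right _ (⟨i1, Or.inl rfl⟩ : (2:ℝ) • ee n i1 ∈ pm2E n))
          rw [e7, hs6] at hl2
          refine ⟨-p (ee n i0 + (-1:ℝ) • ee n i1) - p (ee n i0 + (1:ℝ) • ee n i1),
            Λs.sub_mem (Λs.neg_mem (hps _ (hBm i1 h01))) (hps _ (hBp i1 h01)), ?_⟩
          rw [hl2, hl1]; module
        · refine ⟨-p (ee n i0 + (1:ℝ) • ee n k), Λs.neg_mem (hps _ (hBp k h)), ?_⟩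
          have hl := hlin _ (Set.mem_union_left _ (hBp k h)) _
            (Set.mem_union_right _ hα₀mem)
          rw [e3 k h, hs3 k h] at hl
          rw [hl]; module
    by_cases hT : ∀ α ∈ pm2E n, {y | ∃ t ∈ T, y = p α + t} ≠ Λℓ
    · have hgood : CGoodT n Λs Λℓ p T := by
        refine ⟨?_, hTadd, ?_, hT⟩
        · intro x hx
          have := hTadd 0 (hST h0S) x hx
          rwa [zero_add] at this
        · intro α hα t ht
          rcases hΨ'Φ (hfromT t ht α hα) with ⟨h1, _⟩|⟨_, h2⟩
          · exact (pmEE_disj h1 hα).elim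
          · exact h2
      have hTS : T = S := hSmax T hgood hST
      refine Set.Subset.antisymm ?_ hsubΨ
      intro x hx
      rcases hΨ'Φ hx with ⟨h1, h2⟩|⟨h1, h2⟩
      · exact Set.mem_union_left _ ⟨h1, h2⟩
      · have hx' : (x.1, x.2) ∈ Ψ' := by rwa [Prod.mk.eta]
        have ht := htoT x.1 h1 x.2 hx'
        rw [hTS] at ht
        exact Set.mem_union_right _ ⟨x.1, h1, _, ht,
          by rw [← Prod.mk.eta (p := x)]; exact Prod.ext rfl (by module)⟩
    · push_neg at hT
      obtain ⟨α₁, hα₁, hEq⟩ := hT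
      exfalso
      apply hneq
      refine Set.Subset.antisymm hΨ'Φ ?_
      rintro ⟨x1, x2⟩ (⟨h1, h2⟩|⟨h1, h2⟩)
      · exact hsubΨ (Set.mem_union_left _ ⟨h1, h2⟩)
      · rw [← hEq] at h2
        obtain ⟨t, ht, rfl⟩ := h2
        obtain ⟨w1, hw1, hpw1⟩ := hpd α₁ hα₁
        obtain ⟨w2, hw2, hpw2⟩ := hpd x1 h1
        have hteq : p α₁ + t = p x1 + (t + 2 • (w1 - w2)) := by
          rw [← hr2 (w1 - w2), hpw1, hpw2]; module
        rw [hteq]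
        exact hfromT _ (hTadd t ht _ (Λs.sub_mem hw1 hw2)) x1 h1
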